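/- Let $d = \gcd(n,k)$, $e = \gcd(d,l)$ with $l \mid k$. In $\mathbb{F}_p[X]$, $\gcd\left(\frac{X^k - 1}{X^d - 1},\ X^l - 1\right) = X^l - 1$ if $p \mid \frac{k}{\mathrm{lcm}(d,l)}$, and equals $\frac{X^l - 1}{X^e - 1}$ otherwise. -/

import Mathlib

open Polynomial

noncomputable def Tpoly (p l k : ℕ) : Polynomial (ZMod p) :=
  ∑ i ∈ Finset.range (k / l), X ^ p ^ (l * i)

noncomputable def Spoly (p l k : ℕ) : Polynomial (ZMod p) :=
  ∑ i ∈ Finset.range (k / l), C ((-1 : ZMod p) ^ i) * X ^ p ^ (l * i)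

noncomputable def linAssoc (p : ℕ) (l : Polynomial (ZMod p)) : Polynomial (ZMod p) :=
  ∑ i ∈ l.support, C (l.coeff i) * X ^ p ^ i

/-- Summing `g ∘ (a * · % r)` over `range r` equals summing `g` over `range r`
when `a` is coprime to `r`. -/
lemma sum_range_coprime_mul {M : Type*} [AddCommMonoid M] (g : ℕ → M) (a r : ℕ)
    (hr : 0 < r) (h : Nat.Coprime a r) :
    ∑ s ∈ Finset.range r, g (a * s % r) = ∑ s ∈ Finset.range r, g s := by
  have hinj : ∀ s ∈ Finset.range r, ∀ t ∈ Finset.range r,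
      a * s % r = a * t % r → s = t := by
    intro s hs t ht hst
    simp only [Finset.mem_range] at hs ht
    have hmod : s ≡ t [MOD r] :=
      Nat.ModEq.cancel_left_of_coprime h.symm (by simpa [Nat.ModEq] using hst)
    have h2 : s % r = t % r := hmod
    rwa [Nat.mod_eq_of_lt hs, Nat.mod_eq_of_lt ht] at h2
  have himg : (Finset.range r).image (fun s => a * s % r) = Finset.range r := by
    apply Finset.eq_of_subset_of_card_le
    · intro x hx
      simp only [Finset.mem_image, Finset.mem_range] at hx ⊢
      obtain ⟨s, _, rfl⟩ := hx
      exact Nat.mod_lt _ hr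
    · rw [Finset.card_image_of_injOn hinj]
  calc ∑ s ∈ Finset.range r, g (a * s % r)
      = ∑ x ∈ (Finset.range r).image (fun s => a * s % r), g x :=
        (Finset.sum_image hinj).symm
    _ = ∑ s ∈ Finset.range r, g s := by rw [himg]

/-- `X^l - 1` divides `X^a - X^(a % l)`. -/
lemma dvd_pow_sub_pow_mod {R : Type*} [CommRing R] (l a : ℕ) :
    (X ^ l - 1 : R[X]) ∣ X ^ a - X ^ (a % l) := by
  have h : a = l * (a / l) + a % l := (Nat.div_add_mod a l).symm
  have heq : (X ^ a - X ^ (a % l) : R[X]) = ((X ^ l) ^ (a / l) - 1) * X ^ (a % l) := by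
    rw [sub_mul, one_mul, ← pow_mul, ← pow_add, ← h]
  rw [heq]
  exact Dvd.dvd.mul_right (by simpa using sub_dvd_pow_sub_pow (X ^ l : R[X]) 1 (a / l)) _

theorem stmt15 (p : ℕ) [Fact p.Prime] (n k l : ℕ) (hn : 0 < n) (hk : 0 < k) (hl : 0 < l)
    (hlk : l ∣ k) (d e : ℕ) (hd : d = Nat.gcd n k) (he : e = Nat.gcd d l) :
    gcd (∑ i ∈ Finset.range (k / d), (X : Polynomial (ZMod p)) ^ (d * i))
        ((X : Polynomial (ZMod p)) ^ l - 1) =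
      if p ∣ k / Nat.lcm d l then (X : Polynomial (ZMod p)) ^ l - 1
      else ∑ i ∈ Finset.range (l / e), (X : Polynomial (ZMod p)) ^ (e * i) := by
  have hd0 : 0 < d := hd ▸ Nat.gcd_pos_of_pos_left _ hn
  have hdk : d ∣ k := hd ▸ Nat.gcd_dvd_right n k
  have hed : e ∣ d := he ▸ Nat.gcd_dvd_left d l
  have hel : e ∣ l := he ▸ Nat.gcd_dvd_right d l
  have he0 : 0 < e := he ▸ Nat.gcd_pos_of_pos_left _ hd0
  set r : ℕ := l / e with hrdef
  set c : ℕ := k / Nat.lcm d l with hcdef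
  set d' : ℕ := d / e with hd'def
  have hr0 : 0 < r := Nat.div_pos (Nat.le_of_dvd hl hel) he0
  have hlval : e * r = l := Nat.mul_div_cancel' hel
  have hdval : e * d' = d := Nat.mul_div_cancel' hed
  have hlcmk : Nat.lcm d l ∣ k := Nat.lcm_dvd hdk hlk
  have hdr : d * r = Nat.lcm d l := by
    have h1 : e * Nat.lcm d l = d * l := by rw [he]; exact Nat.gcd_mul_lcm d l
    have h2 : e * (d * r) = e * Nat.lcm d l := by rw [h1, ← hlval]; ring
    exact Nat.eq_of_mul_eq_mul_left he0 h2
  have hkd : k / d = c * r := by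
    have h3 : d * (c * r) = k := by
      calc d * (c * r) = (d * r) * c := by ring
        _ = Nat.lcm d l * c := by rw [hdr]
        _ = k := Nat.mul_div_cancel' hlcmk
    rw [← h3, Nat.mul_div_cancel_left _ hd0]
  have hcop : Nat.Coprime d' r := by
    rw [hd'def, hrdef, he]
    exact Nat.coprime_div_gcd_div_gcd (he ▸ he0)
  set B : Polynomial (ZMod p) := X ^ l - 1 with hBdef
  set S : Polynomial (ZMod p) := ∑ i ∈ Finset.range (l / e), X ^ (e * i) with hSdef
  set T : Polynomial (ZMod p) := ∑ i ∈ Finset.range (k / d), X ^ (d * i) with hTdef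
  have hBmonic : B.Monic := by
    simpa [hBdef] using monic_X_pow_sub_C (1 : ZMod p) hl.ne'
  have hSB : S * (X ^ e - 1) = B := by
    rw [hSdef, hBdef, ← hrdef]
    calc (∑ i ∈ Finset.range r, X ^ (e * i)) * (X ^ e - 1 : Polynomial (ZMod p))
        = (∑ i ∈ Finset.range r, (X ^ e) ^ i) * (X ^ e - 1) := by simp [pow_mul]
      _ = (X ^ e) ^ r - 1 := by rw [geom_sum_mul]
      _ = X ^ l - 1 := by rw [← pow_mul, hlval]
  have hSmonic : S.Monic := by
    have hXe : (X ^ e - 1 : Polynomial (ZMod p)).Monic := by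
      simpa using monic_X_pow_sub_C (1 : ZMod p) he0.ne'
    have hm : (S * (X ^ e - 1)).Monic := by rw [hSB]; exact hBmonic
    exact hXe.of_mul_monic_right hm
  -- the residue sum over one period equals S
  have hperiod : ∑ s ∈ Finset.range r, (X : Polynomial (ZMod p)) ^ (d * s % l) = S := by
    have hterm : ∀ s, d * s % l = e * (d' * s % r) := by
      intro s
      rw [← hlval, ← hdval, mul_assoc, Nat.mul_mod_mul_left]
    calc ∑ s ∈ Finset.range r, (X : Polynomial (ZMod p)) ^ (d * s % l)
        = ∑ s ∈ Finset.range r, (X : Polynomial (ZMod p)) ^ (e * (d' * s % r)) := by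
          simp only [hterm]
      _ = ∑ s ∈ Finset.range r, (X : Polynomial (ZMod p)) ^ (e * s) :=
          sum_range_coprime_mul (fun j => (X : Polynomial (ZMod p)) ^ (e * j)) d' r hr0 hcop
      _ = S := by rw [hSdef, hrdef]
  -- summing over m full periods gives m • S
  have hblock : ∀ m : ℕ, ∑ i ∈ Finset.range (m * r), (X : Polynomial (ZMod p)) ^ (d * i % l)
      = m • S := by
    intro m
    induction m with
    | zero => simp
    | succ m ih =>
      have hmr : (m + 1) * r = m * r + r := by ring
      have hmod : ∀ s, d * (m * r + s) % l = d * s % l := by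
        intro s
        have hdvd : l ∣ d * (m * r) := by
          have : d * (m * r) = Nat.lcm d l * m := by rw [← hdr]; ring
          rw [this]
          exact Dvd.dvd.mul_right (Nat.dvd_lcm_right d l) m
        obtain ⟨t, ht⟩ := hdvd
        rw [mul_add, ht, add_comm, Nat.add_mul_mod_self_left]
      rw [hmr, Finset.sum_range_add, ih]
      simp only [hmod]
      rw [hperiod, succ_nsmul]
  -- T is congruent to c • S modulo B
  set γ : ZMod p := (c : ZMod p) with hγdef
  have hcS : ∑ i ∈ Finset.range (k / d), (X : Polynomial (ZMod p)) ^ (d * i % l)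
      = C γ * S := by
    rw [hkd, hblock c, nsmul_eq_mul, hγdef, ← Polynomial.C_eq_natCast]
  have hTmod : B ∣ T - C γ * S := by
    rw [← hcS, hTdef, ← Finset.sum_sub_distrib]
    exact Finset.dvd_sum fun i _ => dvd_pow_sub_pow_mod l (d * i)
  obtain ⟨Q, hQ⟩ := hTmod
  have hTeq : T = C γ * S + B * Q := by rw [← hQ]; ring
  have hgcd : gcd T B = gcd (C γ * S) B := by
    apply dvd_antisymm_of_normalize_eq (normalize_gcd _ _) (normalize_gcd _ _)
    · refine dvd_gcd ?_ (gcd_dvd_right T B)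
      have : C γ * S = T - B * Q := by rw [hTeq]; ring
      rw [this]
      exact dvd_sub (gcd_dvd_left T B) ((gcd_dvd_right T B).mul_right Q)
    · refine dvd_gcd ?_ (gcd_dvd_right _ B)
      rw [hTeq]
      exact dvd_add (gcd_dvd_left _ B) ((gcd_dvd_right _ B).mul_right Q)
  by_cases hp : p ∣ c
  · rw [if_pos hp]
    have hγ0 : γ = 0 := by
      rw [hγdef]
      exact (ZMod.natCast_eq_zero_iff c p).mpr hp
    rw [hgcd, hγ0, map_zero, zero_mul, gcd_zero_left, hBmonic.normalize_eq_self]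
  · rw [if_neg hp]
    have hγ0 : γ ≠ 0 := by
      rw [hγdef]
      simpa [ZMod.natCast_eq_zero_iff c p] using hp
    rw [hgcd]
    apply dvd_antisymm_of_normalize_eq (normalize_gcd _ _) hSmonic.normalize_eq_self
    · have hdvdS : C γ * S ∣ S :=
        ⟨C γ⁻¹, by rw [mul_comm (C γ) S, mul_assoc, ← C_mul, mul_inv_cancel₀ hγ0, C_1, mul_one]⟩
      exact (gcd_dvd_left _ _).trans hdvdS
    · exact dvd_gcd (Dvd.dvd.mul_left dvd_rfl (C γ)) ⟨X ^ e - 1, hSB.symm⟩
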